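/- Let p be an odd prime, n a positive integer, r ∈ ℤ/p^nℤ and d ∈ (ℤ/p^nℤ)^*. Then the number of 2×2 matrices A over ℤ/p^nℤ with tr(A) = r and det(A) = d is at most p^{2n} · (1 + 3/p). -/

import Mathlib

open Matrix

open Finset

section
variable {p n : ℕ} [Fact p.Prime]

theorem nat_split {j : ℕ} {a b : ℕ} (h : p ^ j ∣ a * b) :
    p ^ ((j+1)/2) ∣ a ∨ p ^ ((j+1)/2) ∣ b := by
  rcases eq_or_ne a 0 with rfl | ha
  · exact Or.inl (dvd_zero _)
  rcases eq_or_ne b 0 with rfl | hb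
  · exact Or.inr (dvd_zero _)
  have hp : p.Prime := Fact.out
  rw [hp.pow_dvd_iff_le_factorization (mul_ne_zero ha hb), Nat.factorization_mul ha hb] at h
  simp only [Finsupp.coe_add, Pi.add_apply] at h
  rcases le_or_gt ((j+1)/2) (a.factorization p) with h1 | h1
  · exact Or.inl ((hp.pow_dvd_iff_le_factorization ha).2 h1)
  · exact Or.inr ((hp.pow_dvd_iff_le_factorization hb).2 (by omega))

theorem dvd_val_iff (hn : 0 < n) {i : ℕ} (hi : i ≤ n) (x : ZMod (p^n)) :
    (p : ZMod (p^n))^i ∣ x ↔ p^i ∣ x.val := by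
  haveI : NeZero (p^n) := ⟨pow_ne_zero n (Fact.out : p.Prime).pos.ne'⟩
  constructor
  · rintro ⟨y, rfl⟩
    rw [show ((p:ZMod (p^n))^i * y) = ((p^i * y.val : ℕ) : ZMod (p^n)) by
      push_cast [ZMod.natCast_rightInverse y]; ring]
    rw [ZMod.val_natCast]
    exact (Nat.dvd_mod_iff (pow_dvd_pow p hi)).2 ⟨y.val, rfl⟩
  · rintro ⟨m, hm⟩
    refine ⟨(m : ZMod (p^n)), ?_⟩
    conv_lhs => rw [← ZMod.natCast_rightInverse x, hm]
    push_cast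
    ring
end

section
variable {p n : ℕ} [Fact p.Prime]

theorem count_dvd (hn : 0 < n) {i : ℕ} (hi : i ≤ n) :
    (univ.filter fun x : ZMod (p^n) => p^i ∣ x.val).card = p^(n-i) := by
  haveI : NeZero (p^n) := ⟨pow_ne_zero n (Fact.out : p.Prime).pos.ne'⟩
  have hp1 : 1 < p := (Fact.out : p.Prime).one_lt
  have hq : p^i * p^(n-i) = p^n := by rw [← pow_add]; congr 1; omega
  rw [show p^(n-i) = (range (p^(n-i))).card from (Finset.card_range _).symm]
  apply Finset.card_bij' (fun x _ => x.val / p^i) (fun k _ => ((p^i * k : ℕ) : ZMod (p^n)))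
  · intro x hx
    simp only [mem_filter, mem_univ, true_and] at hx
    simp only [mem_range]
    have := ZMod.val_lt x
    rw [Nat.div_lt_iff_lt_mul (by positivity)]
    calc x.val < p^n := this
    _ = p^(n-i) * p^i := by rw [← hq]; ring
  · intro k hk
    simp only [mem_range] at hk
    simp only [mem_filter, mem_univ, true_and]
    rw [ZMod.val_natCast]
    exact (Nat.dvd_mod_iff (pow_dvd_pow p hi)).2 ⟨k, rfl⟩
  · intro x hx
    simp only [mem_filter, mem_univ, true_and] at hx
    rw [Nat.mul_div_cancel' hx, ZMod.natCast_rightInverse x]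
  · intro k hk
    simp only [mem_range] at hk
    have hlt : p^i * k < p^n := by
      rw [← hq]; exact (Nat.mul_lt_mul_left (by positivity)).2 hk
    rw [ZMod.val_natCast, Nat.mod_eq_of_lt hlt]
    exact Nat.mul_div_cancel_left k (by positivity)

theorem zmod_split (hn : 0 < n) {j : ℕ} (hj : j ≤ n) {x y : ZMod (p^n)}
    (h : (p : ZMod (p^n))^j ∣ x * y) :
    (p : ZMod (p^n))^((j+1)/2) ∣ x ∨ (p : ZMod (p^n))^((j+1)/2) ∣ y := by
  have hj2 : (j+1)/2 ≤ n := by omega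
  rw [dvd_val_iff hn hj] at h
  rw [dvd_val_iff hn hj2, dvd_val_iff hn hj2]
  rw [ZMod.val_mul] at h
  exact nat_split ((Nat.dvd_mod_iff (pow_dvd_pow p hj)).1 h)
end

section
variable {p n : ℕ} [Fact p.Prime]

theorem card_shift (e : ZMod (p^n) ≃ ZMod (p^n)) (P : ZMod (p^n) → Prop) [DecidablePred P] :
    (univ.filter fun a => P (e a)).card = (univ.filter P).card :=
  Finset.card_equiv e (by simp)

theorem quad_bound (hn : 0 < n) {j : ℕ} (hj1 : 1 ≤ j) (hjn : j ≤ n) (r d : ZMod (p^n)) :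
    (univ.filter fun a : ZMod (p^n) => p^j ∣ (a * (r - a) - d).val).card
      ≤ 2 * p^(n-(j+1)/2) := by
  set i := (j+1)/2 with hidef
  have hi : i ≤ n := by omega
  rcases (univ.filter fun a : ZMod (p^n) => p^j ∣ (a * (r - a) - d).val).eq_empty_or_nonempty
    with he | ⟨a₀, ha₀⟩
  · rw [he]; simp
  simp only [mem_filter, mem_univ, true_and] at ha₀
  rw [← dvd_val_iff hn hjn] at ha₀
  have hsub : (univ.filter fun a : ZMod (p^n) => p^j ∣ (a * (r - a) - d).val) ⊆
      (univ.filter fun a : ZMod (p^n) => p^i ∣ (a - a₀).val) ∪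
      (univ.filter fun a : ZMod (p^n) => p^i ∣ ((r - a₀) - a).val) := by
    intro a ha
    simp only [mem_filter, mem_univ, true_and] at ha
    rw [← dvd_val_iff hn hjn] at ha
    have hdiff : (p : ZMod (p^n))^j ∣ (a - a₀) * ((r - a₀) - a) := by
      have : (a - a₀) * ((r - a₀) - a) = (a * (r - a) - d) - (a₀ * (r - a₀) - d) := by ring
      rw [this]
      exact dvd_sub ha ha₀
    rcases zmod_split hn hjn hdiff with h | h <;>
      rw [dvd_val_iff hn hi] at h
    · exact mem_union_left _ (by simp [h])
    · exact mem_union_right _ (by simp [h])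
  calc (univ.filter fun a : ZMod (p^n) => p^j ∣ (a * (r - a) - d).val).card
      ≤ _ := Finset.card_le_card hsub
    _ ≤ (univ.filter fun a : ZMod (p^n) => p^i ∣ (a - a₀).val).card
        + (univ.filter fun a : ZMod (p^n) => p^i ∣ ((r - a₀) - a).val).card :=
      Finset.card_union_le _ _
    _ = 2 * p^(n-i) := by
      have h1 := card_shift (Equiv.subRight a₀) (fun x : ZMod (p^n) => p^i ∣ x.val)
      have h2 := card_shift (Equiv.subLeft (r - a₀)) (fun x : ZMod (p^n) => p^i ∣ x.val)
      simp only [Equiv.subRight_apply] at h1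
      simp only [Equiv.subLeft_apply] at h2
      rw [h1, h2, count_dvd hn hi]
      ring
end

section
variable {p n : ℕ} [Fact p.Prime]

/-- valuation of `b` in `ZMod (p^n)`, with value `n` at `0`. -/
def vB (p n : ℕ) (b : ZMod (p^n)) : ℕ := if b = 0 then n else b.val.factorization p

theorem vB_le (hn : 0 < n) (b : ZMod (p^n)) : vB p n b ≤ n := by
  haveI : NeZero (p^n) := ⟨pow_ne_zero n (Fact.out : p.Prime).pos.ne'⟩
  unfold vB
  split
  · exact le_refl n
  · next hb =>
    have hv : b.val ≠ 0 := fun h => hb (by rwa [ZMod.val_eq_zero] at h)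
    have h1 := Nat.ordProj_dvd b.val p
    have h2 : p ^ (b.val.factorization p) ≤ b.val := Nat.le_of_dvd (Nat.pos_of_ne_zero hv) h1
    have h3 : b.val < p^n := ZMod.val_lt b
    by_contra hc
    push_neg at hc
    have : p^n ≤ p^(b.val.factorization p) :=
      Nat.pow_le_pow_right (Fact.out : p.Prime).pos hc.le
    omega

theorem pow_vB_dvd (hn : 0 < n) (b : ZMod (p^n)) : (p : ZMod (p^n))^(vB p n b) ∣ b := by
  haveI : NeZero (p^n) := ⟨pow_ne_zero n (Fact.out : p.Prime).pos.ne'⟩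
  unfold vB
  split
  · next hb => rw [hb]; exact dvd_zero _
  · next hb =>
    have hle : b.val.factorization p ≤ n := by
      have := vB_le hn b
      simpa [vB, hb] using this
    rw [dvd_val_iff hn hle]
    exact Nat.ordProj_dvd b.val p

theorem card_ker (hn : 0 < n) (b : ZMod (p^n)) :
    (univ.filter fun c : ZMod (p^n) => b * c = 0).card ≤ p ^ (vB p n b) := by
  haveI : NeZero (p^n) := ⟨pow_ne_zero n (Fact.out : p.Prime).pos.ne'⟩
  have hp : p.Prime := Fact.out
  rcases eq_or_ne b 0 with rfl | hb
  · have hvb : vB p n (0 : ZMod (p^n)) = n := if_pos rfl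
    rw [hvb]
    have h1 := Finset.card_filter_le (univ : Finset (ZMod (p^n)))
      (fun c => (0:ZMod (p^n)) * c = 0)
    rw [Finset.card_univ, ZMod.card] at h1
    exact h1
  · set j := b.val.factorization p with hj
    have hvb : vB p n b = j := by simp [vB, hb, hj]
    have hv : b.val ≠ 0 := fun h => hb (by rwa [ZMod.val_eq_zero] at h)
    have hjn : j ≤ n := hvb ▸ vB_le hn b
    have hsub : (univ.filter fun c : ZMod (p^n) => b * c = 0) ⊆
        (univ.filter fun c : ZMod (p^n) => p^(n-j) ∣ c.val) := by
      intro c hc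
      simp only [mem_filter, mem_univ, true_and] at hc ⊢
      have hval : b.val * c.val % p^n = 0 := by
        rw [← ZMod.val_mul, hc, ZMod.val_zero]
      have hdvd : p^n ∣ b.val * c.val := Nat.dvd_of_mod_eq_zero hval
      rcases eq_or_ne c.val 0 with h0 | h0
      · rw [h0]; exact dvd_zero _
      have hfac : n ≤ (b.val * c.val).factorization p :=
        (Nat.Prime.pow_dvd_iff_le_factorization hp (mul_ne_zero hv h0)).1 hdvd
      rw [Nat.factorization_mul hv h0] at hfac
      simp only [Finsupp.coe_add, Pi.add_apply] at hfac
      exact (Nat.Prime.pow_dvd_iff_le_factorization hp h0).2 (by omega)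
    calc _ ≤ _ := Finset.card_le_card hsub
      _ = p^(n-(n-j)) := count_dvd hn (by omega)
      _ = p^(vB p n b) := by rw [hvb]; congr 1; omega

theorem card_sol (hn : 0 < n) (b y : ZMod (p^n)) :
    (univ.filter fun c : ZMod (p^n) => b * c = y).card
      ≤ if p^(vB p n b) ∣ y.val then p^(vB p n b) else 0 := by
  haveI : NeZero (p^n) := ⟨pow_ne_zero n (Fact.out : p.Prime).pos.ne'⟩
  by_cases h : p^(vB p n b) ∣ y.val
  · rw [if_pos h]
    rcases (univ.filter fun c : ZMod (p^n) => b * c = y).eq_empty_or_nonempty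
      with he | ⟨c₀, hc₀⟩
    · rw [he]; positivity
    simp only [mem_filter, mem_univ, true_and] at hc₀
    calc (univ.filter fun c : ZMod (p^n) => b * c = y).card
        ≤ (univ.filter fun c : ZMod (p^n) => b * c = 0).card := by
          apply Finset.card_le_card_of_injOn (fun c => c - c₀)
          · intro c hc
            simp only [Finset.mem_coe, mem_filter, mem_univ, true_and] at hc ⊢
            rw [mul_sub, hc, hc₀, sub_self]
          · intro x _ y _ hxy
            exact sub_left_injective hxy
      _ ≤ p ^ (vB p n b) := card_ker hn b
  · rw [if_neg h, Nat.le_zero, Finset.card_eq_zero, Finset.filter_eq_empty_iff]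
    intro c _
    intro hc
    apply h
    rw [← dvd_val_iff hn (vB_le hn b)]
    exact hc ▸ Dvd.dvd.mul_right (pow_vB_dvd hn b) c
end

section arith

theorem Vrec (q : ℚ) {n : ℕ} (hn : 1 ≤ n) :
    (∑ j ∈ Ico 1 (n+1), q^(n+1-(j+1)/2))
      = q * (∑ j ∈ Ico 1 n, q^(n-(j+1)/2)) + q^(n/2+1) := by
  rw [Finset.sum_Ico_succ_top (by omega), Finset.mul_sum]
  congr 1
  · apply Finset.sum_congr rfl
    intro j hj
    simp only [mem_Ico] at hj
    rw [show n+1-(j+1)/2 = (n-(j+1)/2)+1 from by omega, pow_succ]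
    ring
  · congr 1
    omega

theorem ident (q : ℚ) : ∀ n : ℕ, 1 ≤ n →
    2*(q^n - q^(n-1))*(∑ j ∈ Ico 1 n, q^(n-(j+1)/2)) + 2*q^(n+n/2) + 2*q^(n-1+(n+1)/2)
      = 4*q^(2*n-1) := by
  intro n hn
  induction n, hn using Nat.le_induction with
  | base =>
    norm_num; ring
  | succ n hn ih =>
    obtain ⟨u, rfl⟩ : ∃ u, n = u + 1 := ⟨n-1, by omega⟩
    rw [Vrec q (by omega)]
    rw [show u+1+1-1+(u+1+1+1)/2 = u+(u+1)/2+2 from by omega,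
        show u+1+1+(u+1+1)/2 = u+u/2+3 from by omega,
        show u+1+1-1 = u+1 from by omega,
        show 2*(u+1+1)-1 = 2*u+3 from by omega]
    rw [show u+1-1+(u+1+1)/2 = u+u/2+1 from by omega,
        show u+1-1 = u from by omega,
        show 2*(u+1)-1 = 2*u+1 from by omega] at ih
    linear_combination q^2 * ih
end arith

theorem arith (q : ℚ) (hq : 0 ≤ q) {n : ℕ} (hn : 1 ≤ n) :
    (q^n - q^(n-1))*q^n + (∑ j ∈ Ico 1 n, (q^n - q^(n-1))*(2*q^(n-(j+1)/2)))
        + 2*q^n*q^(n-(n+1)/2)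
      ≤ q^(2*n) + 3*q^(2*n-1) := by
  have hid := ident q n hn
  have hV : ∑ j ∈ Ico 1 n, (q^n - q^(n-1))*(2*q^(n-(j+1)/2))
      = 2*(q^n - q^(n-1))*(∑ j ∈ Ico 1 n, q^(n-(j+1)/2)) := by
    rw [Finset.mul_sum]
    exact Finset.sum_congr rfl (fun j _ => by ring)
  rw [hV, show n - (n+1)/2 = n/2 from by omega,
      show 2*n-1 = n-1+n from by omega, show 2*n = n+n from by omega]
  rw [show 2*n-1 = n-1+n from by omega] at hid
  have key : (q^n - q^(n-1))*q^n
        + 2*(q^n - q^(n-1))*(∑ j ∈ Ico 1 n, q^(n-(j+1)/2)) + 2*q^n*q^(n/2)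
      = q^(n+n) + 3*q^(n-1+n) - 2*q^(n-1+(n+1)/2) := by
    linear_combination hid
  rw [key]
  have pos : (0:ℚ) ≤ 2*q^(n-1+(n+1)/2) := by positivity
  linarith

section main
variable {p n : ℕ} [Fact p.Prime]

theorem cB_lt (hn : 0 < n) {j : ℕ} (hj : j < n) :
    (univ.filter fun b : ZMod (p^n) => vB p n b = j).card ≤ p^(n-j) - p^(n-j-1) := by
  haveI : NeZero (p^n) := ⟨pow_ne_zero n (Fact.out : p.Prime).pos.ne'⟩
  have hp : p.Prime := Fact.out
  have hsub : (univ.filter fun b : ZMod (p^n) => vB p n b = j) ⊆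
      (univ.filter fun b : ZMod (p^n) => p^j ∣ b.val) \
      (univ.filter fun b : ZMod (p^n) => p^(j+1) ∣ b.val) := by
    intro b hb
    simp only [mem_filter, mem_univ, true_and] at hb
    have hb0 : b ≠ 0 := by
      intro h
      rw [h, show vB p n (0 : ZMod (p^n)) = n from if_pos rfl] at hb
      omega
    have hv : b.val ≠ 0 := fun h => hb0 (by rwa [ZMod.val_eq_zero] at h)
    simp only [vB, if_neg hb0] at hb
    rw [Finset.mem_sdiff]
    constructor
    · simp only [mem_filter, mem_univ, true_and]
      rw [← hb]
      exact Nat.ordProj_dvd b.val p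
    · simp only [mem_filter, mem_univ, true_and]
      rw [← hb]
      exact Nat.pow_succ_factorization_not_dvd hv hp
  calc _ ≤ _ := Finset.card_le_card hsub
    _ = _ := by
      rw [Finset.card_sdiff_of_subset (by
        intro b hb
        simp only [mem_filter, mem_univ, true_and] at hb ⊢
        exact dvd_trans (pow_dvd_pow p (by omega)) hb)]
      rw [count_dvd hn (by omega), count_dvd hn (by omega),
        show n - (j+1) = n - j - 1 from by omega]

theorem cB_top (hn : 0 < n) :
    (univ.filter fun b : ZMod (p^n) => vB p n b = n).card ≤ 1 := by
  haveI : NeZero (p^n) := ⟨pow_ne_zero n (Fact.out : p.Prime).pos.ne'⟩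
  have hp : p.Prime := Fact.out
  have hsub : (univ.filter fun b : ZMod (p^n) => vB p n b = n) ⊆ {0} := by
    intro b hb
    simp only [mem_filter, mem_univ, true_and] at hb
    simp only [Finset.mem_singleton]
    by_contra hb0
    have hv : b.val ≠ 0 := fun h => hb0 (by rwa [ZMod.val_eq_zero] at h)
    simp only [vB, if_neg hb0] at hb
    have h1 : p^n ∣ b.val := by
      have := Nat.ordProj_dvd b.val p
      rwa [hb] at this
    have h2 : b.val < p^n := ZMod.val_lt b
    have := Nat.le_of_dvd (Nat.pos_of_ne_zero hv) h1
    omega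
  calc _ ≤ _ := Finset.card_le_card hsub
    _ = 1 := Finset.card_singleton 0

theorem total_le (hn : 0 < n) (r d : ZMod (p^n)) :
    (univ.filter fun x : ZMod (p^n) × ZMod (p^n) × ZMod (p^n) =>
        x.2.1 * x.2.2 = x.1 * (r - x.1) - d).card
      ≤ (p^n - p^(n-1))*p^n + (∑ j ∈ Ico 1 n, (p^n - p^(n-1))*(2*p^(n-(j+1)/2)))
          + 2*p^n*p^(n-(n+1)/2) := by
  haveI : NeZero (p^n) := ⟨pow_ne_zero n (Fact.out : p.Prime).pos.ne'⟩
  have hp : p.Prime := Fact.out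
  set A : ℕ → ℕ := fun j =>
    (univ.filter fun a : ZMod (p^n) => p^j ∣ (a * (r - a) - d).val).card with hA
  -- Step 1: fiberwise count over (a, b)
  have step1 : (univ.filter fun x : ZMod (p^n) × ZMod (p^n) × ZMod (p^n) =>
        x.2.1 * x.2.2 = x.1 * (r - x.1) - d).card
      = ∑ a : ZMod (p^n), ∑ b : ZMod (p^n),
          (univ.filter fun c : ZMod (p^n) => b * c = a * (r - a) - d).card := by
    rw [Finset.card_filter, Fintype.sum_prod_type]
    apply Finset.sum_congr rfl
    intro a _
    rw [Fintype.sum_prod_type]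
    apply Finset.sum_congr rfl
    intro b _
    rw [Finset.card_filter]
  -- Step 2: bound each fiber
  have step2 : ∑ a : ZMod (p^n), ∑ b : ZMod (p^n),
        (univ.filter fun c : ZMod (p^n) => b * c = a * (r - a) - d).card
      ≤ ∑ b : ZMod (p^n), A (vB p n b) * p^(vB p n b) := by
    rw [Finset.sum_comm]
    apply Finset.sum_le_sum
    intro b _
    calc ∑ a : ZMod (p^n), (univ.filter fun c : ZMod (p^n) => b * c = a * (r - a) - d).card
        ≤ ∑ a : ZMod (p^n), if p^(vB p n b) ∣ (a * (r - a) - d).val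
              then p^(vB p n b) else 0 := by
          apply Finset.sum_le_sum
          intro a _
          exact card_sol hn b _
      _ = A (vB p n b) * p^(vB p n b) := by
          rw [← Finset.sum_filter]
          rw [Finset.sum_const, smul_eq_mul]
  -- Step 3: group by valuation
  have step3 : ∑ b : ZMod (p^n), A (vB p n b) * p^(vB p n b)
      = ∑ j ∈ Finset.range (n+1),
          (univ.filter fun b : ZMod (p^n) => vB p n b = j).card * (A j * p^j) := by
    rw [← Finset.sum_fiberwise_of_maps_to (g := vB p n) (t := Finset.range (n+1))
      (fun b _ => Finset.mem_range.2 (by have := vB_le hn b; omega))]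
    apply Finset.sum_congr rfl
    intro j _
    have hcongr : ∑ b ∈ (univ.filter fun b : ZMod (p^n) => vB p n b = j),
        A (vB p n b) * p^(vB p n b)
        = ∑ _b ∈ (univ.filter fun b : ZMod (p^n) => vB p n b = j), A j * p^j := by
      apply Finset.sum_congr rfl
      intro b hb
      simp only [mem_filter, mem_univ, true_and] at hb
      rw [hb]
    rw [hcongr, Finset.sum_const, smul_eq_mul]
  -- Step 4: estimate
  have keyeq : ∀ j, j < n → (p^(n-j) - p^(n-j-1))*p^j = p^n - p^(n-1) := by
    intro j hj
    rw [Nat.sub_mul, ← pow_add, ← pow_add]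
    congr 2 <;> omega
  calc (univ.filter fun x : ZMod (p^n) × ZMod (p^n) × ZMod (p^n) =>
        x.2.1 * x.2.2 = x.1 * (r - x.1) - d).card
      ≤ ∑ b : ZMod (p^n), A (vB p n b) * p^(vB p n b) := step1 ▸ step2
    _ = ∑ j ∈ Finset.range (n+1),
          (univ.filter fun b : ZMod (p^n) => vB p n b = j).card * (A j * p^j) := step3
    _ ≤ (p^n - p^(n-1))*p^n + (∑ j ∈ Ico 1 n, (p^n - p^(n-1))*(2*p^(n-(j+1)/2)))
          + 2*p^n*p^(n-(n+1)/2) := by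
      rw [Finset.sum_range_succ, Finset.range_eq_Ico, Finset.sum_eq_sum_Ico_succ_bot hn]
      apply Nat.add_le_add
      apply Nat.add_le_add
      · -- j = 0 term
        have hA0 : A 0 ≤ p^n := by
          have h1 := Finset.card_filter_le (univ : Finset (ZMod (p^n)))
            (fun a => p^0 ∣ (a * (r - a) - d).val)
          rw [Finset.card_univ, ZMod.card] at h1
          exact h1
        have hc0 : (univ.filter fun b : ZMod (p^n) => vB p n b = 0).card
            ≤ p^n - p^(n-1) := by
          have := cB_lt (p := p) hn hn
          simpa using this
        calc (univ.filter fun b : ZMod (p^n) => vB p n b = 0).card * (A 0 * p^0)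
            ≤ (p^n - p^(n-1)) * (p^n * 1) := by
              apply Nat.mul_le_mul hc0
              rw [pow_zero]
              exact Nat.mul_le_mul hA0 (le_refl 1)
          _ = (p^n - p^(n-1)) * p^n := by ring
      · -- middle terms
        apply Finset.sum_le_sum
        intro j hj
        simp only [Finset.mem_Ico] at hj
        calc (univ.filter fun b : ZMod (p^n) => vB p n b = j).card * (A j * p^j)
            ≤ (p^(n-j) - p^(n-j-1)) * (2*p^(n-(j+1)/2) * p^j) :=
              Nat.mul_le_mul (cB_lt hn hj.2)
                (Nat.mul_le_mul (quad_bound hn hj.1 (by omega) r d) (le_refl _))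
          _ = ((p^(n-j) - p^(n-j-1)) * p^j) * (2*p^(n-(j+1)/2)) := by ring
          _ = (p^n - p^(n-1))*(2*p^(n-(j+1)/2)) := by rw [keyeq j hj.2]
      · -- top term
        calc (univ.filter fun b : ZMod (p^n) => vB p n b = n).card * (A n * p^n)
            ≤ 1 * (2*p^(n-(n+1)/2) * p^n) :=
              Nat.mul_le_mul (cB_top hn)
                (Nat.mul_le_mul (quad_bound hn hn (le_refl n) r d) (le_refl _))
          _ = 2*p^n*p^(n-(n+1)/2) := by ring
end main

def matEquiv (p n : ℕ) (r d : ZMod (p^n)) :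
    {A : Matrix (Fin 2) (Fin 2) (ZMod (p^n)) |
      Matrix.trace A = r ∧ Matrix.det A = d} ≃
    {x : ZMod (p^n) × ZMod (p^n) × ZMod (p^n) //
      x.2.1 * x.2.2 = x.1 * (r - x.1) - d} where
  toFun A := ⟨(A.1 0 0, A.1 0 1, A.1 1 0), by
    obtain ⟨h1, h2⟩ := A.2
    rw [Matrix.trace_fin_two] at h1
    rw [Matrix.det_fin_two] at h2
    simp only
    linear_combination (A.1 0 0) * h1 - h2⟩
  invFun x := ⟨!![x.1.1, x.1.2.1; x.1.2.2, r - x.1.1], by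
    constructor
    · rw [Matrix.trace_fin_two]
      simp
    · rw [Matrix.det_fin_two]
      have hx := x.2
      simp
      linear_combination -hx⟩
  left_inv A := by
    apply Subtype.ext
    obtain ⟨h1, h2⟩ := A.2
    rw [Matrix.trace_fin_two] at h1
    ext i j
    fin_cases i <;> fin_cases j <;> simp
    linear_combination -h1
  right_inv x := by
    apply Subtype.ext
    simp

/-- **Lemma (Bonn lemma, upper bound).**
For an odd prime `p`, a positive integer `n`, `r ∈ ℤ/p^nℤ` and a unit
`d ∈ (ℤ/p^nℤ)^*`, the number of 2×2 matrices `A` over `ℤ/p^nℤ` with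
`tr A = r` and `det A = d` is at most `p^{2n}(1 + 3/p)`. -/
theorem card_matrices_fixed_trace_det_le (p : ℕ) [Fact p.Prime] (hp : p ≠ 2)
    (n : ℕ) (hn : 0 < n) (r d : ZMod (p ^ n)) (hd : IsUnit d) :
    (Nat.card {A : Matrix (Fin 2) (Fin 2) (ZMod (p ^ n)) |
        Matrix.trace A = r ∧ Matrix.det A = d} : ℚ)
      ≤ (p : ℚ) ^ (2 * n) * (1 + 3 / p) := by
  haveI : NeZero (p^n) := ⟨pow_ne_zero n (Fact.out : p.Prime).pos.ne'⟩
  have hprime : p.Prime := Fact.out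
  have hp3 : 3 ≤ p := by
    have := hprime.two_le
    omega
  rw [Nat.card_congr (matEquiv p n r d), Nat.card_eq_fintype_card, Fintype.card_subtype]
  have hbound := total_le hn r d
  have hpow : p^(n-1) ≤ p^n := Nat.pow_le_pow_right hprime.pos (by omega)
  have hq : (0:ℚ) ≤ (p:ℚ) := by positivity
  calc ((univ.filter fun x : ZMod (p^n) × ZMod (p^n) × ZMod (p^n) =>
        x.2.1 * x.2.2 = x.1 * (r - x.1) - d).card : ℚ)
      ≤ (((p^n - p^(n-1))*p^n + (∑ j ∈ Ico 1 n, (p^n - p^(n-1))*(2*p^(n-(j+1)/2)))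
          + 2*p^n*p^(n-(n+1)/2) : ℕ) : ℚ) := by exact_mod_cast Nat.cast_le.2 hbound
    _ = ((p:ℚ)^n - (p:ℚ)^(n-1))*(p:ℚ)^n
          + (∑ j ∈ Ico 1 n, ((p:ℚ)^n - (p:ℚ)^(n-1))*(2*(p:ℚ)^(n-(j+1)/2)))
          + 2*(p:ℚ)^n*(p:ℚ)^(n-(n+1)/2) := by
        push_cast [Nat.cast_sub hpow]
        ring
    _ ≤ (p:ℚ)^(2*n) + 3*(p:ℚ)^(2*n-1) := arith (p:ℚ) hq hn
    _ = (p:ℚ)^(2*n) * (1 + 3/(p:ℚ)) := by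
        rw [show 2*n = (2*n-1)+1 from by omega, pow_succ]
        have hne : (p:ℚ) ≠ 0 := by positivity
        field_simp
        rw [show 2*n-1+1-1 = 2*n-1 from by omega]
        ring
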